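/- Let (W1, W2, W3) be finite-valued random variables with ABCMI, let F ≥ 2 be a natural number, and let h0, h1, h2, h3 be real numbers with 0 ≤ h_d < log F for each d ∈ {0,1,2,3} (the entropies of the uplink and downlink noises). For any real δ > 0, define κ := max over distinct i,j,k ∈ {1,2,3} of ( H[(W_j, W_k) | W_i] + δ ) / ( log F − max{h0, h_i} ). Then there exist positive real numbers R1, R2, R3 such that for all distinct i, j, k ∈ {1,2,3}: κ·R_i > H[W_i | (W_j, W_k)], κ·(R_i + R_j) > H[(W_i, W_j) | W_k], and R_j + R_k < log F − max{h0, h_i}. -/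

import Mathlib

open MeasureTheory ProbabilityTheory

/-- Shannon entropy of a finite-valued random variable. -/
noncomputable def shEntropy {Ω : Type*} [MeasurableSpace Ω] (μ : Measure Ω)
    {α : Type*} [Fintype α] (X : Ω → α) : ℝ :=
  - ∑ x : α, ((μ (X ⁻¹' {x})).toReal * Real.log (μ (X ⁻¹' {x})).toReal)

/-- Conditional Shannon entropy `H[X | Y]`. -/
noncomputable def shCondEntropy {Ω : Type*} [MeasurableSpace Ω] (μ : Measure Ω)
    {α β : Type*} [Fintype α] [Fintype β] (X : Ω → α) (Y : Ω → β) : ℝ :=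
  shEntropy μ (fun ω => (X ω, Y ω)) - shEntropy μ Y

/-- Mutual information `I[X : Y]`. -/
noncomputable def shMutualInfo {Ω : Type*} [MeasurableSpace Ω] (μ : Measure Ω)
    {α β : Type*} [Fintype α] [Fintype β] (X : Ω → α) (Y : Ω → β) : ℝ :=
  shEntropy μ X + shEntropy μ Y - shEntropy μ (fun ω => (X ω, Y ω))

/-- Conditional mutual information `I[X : Y | Z]`. -/
noncomputable def shCondMutualInfo {Ω : Type*} [MeasurableSpace Ω] (μ : Measure Ω)
    {α β γ : Type*} [Fintype α] [Fintype β] [Fintype γ]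
    (X : Ω → α) (Y : Ω → β) (Z : Ω → γ) : ℝ :=
  shCondEntropy μ X Z + shCondEntropy μ Y Z -
    shCondEntropy μ (fun ω => (X ω, Y ω)) Z

lemma shEntropy_comp_inj {Ω : Type*} [MeasurableSpace Ω] (μ : Measure Ω)
    {β γ : Type*} [Fintype β] [Fintype γ] (X : Ω → β) (e : β → γ)
    (he : Function.Injective e) :
    shEntropy μ (fun ω => e (X ω)) = shEntropy μ X := by
  classical
  unfold shEntropy
  congr 1
  have h0 : ∀ y ∈ Finset.univ, y ∉ Finset.univ.image e →
      (μ ((fun ω => e (X ω)) ⁻¹' {y})).toReal *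
        Real.log (μ ((fun ω => e (X ω)) ⁻¹' {y})).toReal = 0 := by
    intro y _ hy
    have hemp : (fun ω => e (X ω)) ⁻¹' {y} = ∅ := by
      ext ω
      simp only [Set.mem_preimage, Set.mem_singleton_iff, Set.mem_empty_iff_false, iff_false]
      intro hcon
      exact hy (Finset.mem_image.mpr ⟨X ω, Finset.mem_univ _, hcon⟩)
    simp [hemp]
  rw [← Finset.sum_subset (Finset.subset_univ (Finset.univ.image e)) h0,
    Finset.sum_image (fun x _ x' _ hxx => he hxx)]
  apply Finset.sum_congr rfl
  intro x _
  have hpre : (fun ω => e (X ω)) ⁻¹' {e x} = X ⁻¹' {x} := by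
    ext ω; simp [he.eq_iff]
  rw [hpre]

lemma shE_swap {Ω : Type*} [MeasurableSpace Ω] (μ : Measure Ω)
    {β γ : Type*} [Fintype β] [Fintype γ] (X : Ω → β) (Y : Ω → γ) :
    shEntropy μ (fun ω => (X ω, Y ω)) = shEntropy μ (fun ω => (Y ω, X ω)) :=
  shEntropy_comp_inj μ (fun ω => (Y ω, X ω)) Prod.swap Prod.swap_injective

lemma shE_rot {Ω : Type*} [MeasurableSpace Ω] (μ : Measure Ω)
    {β γ ε : Type*} [Fintype β] [Fintype γ] [Fintype ε] (X : Ω → β) (Y : Ω → γ) (Z : Ω → ε) :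
    shEntropy μ (fun ω => ((X ω, Y ω), Z ω)) = shEntropy μ (fun ω => ((Y ω, Z ω), X ω)) :=
  shEntropy_comp_inj μ (fun ω => ((Y ω, Z ω), X ω)) (fun p => ((p.2, p.1.1), p.1.2))
    (by rintro ⟨⟨a,b⟩,c⟩ ⟨⟨d,e⟩,f⟩ hh; simp [Prod.ext_iff] at hh ⊢; tauto)

lemma shE_swapIn {Ω : Type*} [MeasurableSpace Ω] (μ : Measure Ω)
    {β γ ε : Type*} [Fintype β] [Fintype γ] [Fintype ε] (X : Ω → β) (Y : Ω → γ) (Z : Ω → ε) :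
    shEntropy μ (fun ω => ((X ω, Y ω), Z ω)) = shEntropy μ (fun ω => ((Y ω, X ω), Z ω)) :=
  shEntropy_comp_inj μ (fun ω => ((Y ω, X ω), Z ω)) (fun p => ((p.1.2, p.1.1), p.2))
    (by rintro ⟨⟨a,b⟩,c⟩ ⟨⟨d,e⟩,f⟩ hh; simp [Prod.ext_iff] at hh ⊢; tauto)

lemma shE_assoc {Ω : Type*} [MeasurableSpace Ω] (μ : Measure Ω)
    {β γ ε : Type*} [Fintype β] [Fintype γ] [Fintype ε] (X : Ω → β) (Y : Ω → γ) (Z : Ω → ε) :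
    shEntropy μ (fun ω => (X ω, (Y ω, Z ω))) = shEntropy μ (fun ω => ((X ω, Y ω), Z ω)) :=
  shEntropy_comp_inj μ (fun ω => ((X ω, Y ω), Z ω)) (fun p => (p.1.1, (p.1.2, p.2)))
    (by rintro ⟨⟨a,b⟩,c⟩ ⟨⟨d,e⟩,f⟩ hh; simp [Prod.ext_iff] at hh ⊢; tauto)

lemma sum_mul_log_le {ι : Type*} [Fintype ι] (p : ι → ℝ) (q : ℝ)
    (hp0 : ∀ x, 0 ≤ p x) (hpq : ∀ x, p x ≤ q) (hq0 : 0 ≤ q) (hq1 : q ≤ 1)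
    (hqs : q ≤ ∑ x, p x) :
    ∑ x, p x * Real.log (p x) ≤ q * Real.log q := by
  calc ∑ x, p x * Real.log (p x) ≤ ∑ x, p x * Real.log q := by
        apply Finset.sum_le_sum
        intro x _
        rcases eq_or_lt_of_le (hp0 x) with hx | hx
        · simp [← hx]
        · exact mul_le_mul_of_nonneg_left (Real.log_le_log hx (hpq x)) (hp0 x)
    _ = (∑ x, p x) * Real.log q := by rw [Finset.sum_mul]
    _ ≤ q * Real.log q := mul_le_mul_of_nonpos_right hqs (Real.log_nonpos hq0 hq1)

lemma shEntropy_le_pair {Ω : Type*} [MeasurableSpace Ω] (μ : Measure Ω) [IsProbabilityMeasure μ]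
    {β γ : Type*} [Fintype β] [Fintype γ] (X : Ω → β) (Y : Ω → γ) :
    shEntropy μ Y ≤ shEntropy μ (fun ω => (X ω, Y ω)) := by
  unfold shEntropy
  rw [neg_le_neg_iff, Fintype.sum_prod_type, Finset.sum_comm]
  apply Finset.sum_le_sum
  intro y _
  apply sum_mul_log_le
  · intro x; exact ENNReal.toReal_nonneg
  · intro x
    refine ENNReal.toReal_mono (measure_ne_top μ _) (measure_mono ?_)
    intro ω hω
    simp only [Set.mem_preimage, Set.mem_singleton_iff, Prod.mk.injEq] at hω ⊢
    exact hω.2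
  · exact ENNReal.toReal_nonneg
  · have h1 : μ (Y ⁻¹' {y}) ≤ 1 := prob_le_one
    simpa using ENNReal.toReal_mono ENNReal.one_ne_top h1
  · have hsub : Y ⁻¹' {y} ⊆ ⋃ x : β, (fun ω => (X ω, Y ω)) ⁻¹' {(x, y)} := by
      intro ω hω
      simp only [Set.mem_preimage, Set.mem_singleton_iff] at hω
      exact Set.mem_iUnion.mpr ⟨X ω, by simp [hω]⟩
    calc (μ (Y ⁻¹' {y})).toReal
        ≤ (∑ x : β, μ ((fun ω => (X ω, Y ω)) ⁻¹' {(x, y)})).toReal := by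
          refine ENNReal.toReal_mono (ENNReal.sum_ne_top.mpr fun _ _ => measure_ne_top μ _) ?_
          exact (measure_mono hsub).trans ((measure_iUnion_le _).trans_eq (tsum_fintype _))
      _ = ∑ x : β, (μ ((fun ω => (X ω, Y ω)) ⁻¹' {(x, y)})).toReal :=
          ENNReal.toReal_sum (fun _ _ => measure_ne_top μ _)

theorem stmt3 {Ω : Type*} [MeasurableSpace Ω] (μ : Measure Ω) [IsProbabilityMeasure μ]
    {α : Fin 3 → Type*} [∀ i, Fintype (α i)] [∀ i, Nonempty (α i)]
    [∀ i, MeasurableSpace (α i)]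
    (W : ∀ i, Ω → α i) (hW : ∀ i, Measurable (W i))
    (habcmi : ∀ i j k : Fin 3, i ≠ j → j ≠ k → i ≠ k →
      shCondMutualInfo μ (W i) (W j) (W k) ≤
        shCondMutualInfo μ (W j) (W k) (W i) + shCondMutualInfo μ (W i) (W k) (W j))
    (F : ℕ) (hF : 2 ≤ F) (h0 : ℝ) (h : Fin 3 → ℝ)
    (hh0 : 0 ≤ h0 ∧ h0 < Real.log F) (hh : ∀ i, 0 ≤ h i ∧ h i < Real.log F)
    (δ : ℝ) (hδ : 0 < δ) (κ : ℝ)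
    (hκ : κ = ((Finset.univ : Finset (Fin 3 × Fin 3 × Fin 3)).filter
        (fun p => p.1 ≠ p.2.1 ∧ p.2.1 ≠ p.2.2 ∧ p.1 ≠ p.2.2)).sup'
        (by decide)
        (fun p => (shCondEntropy μ (fun ω => (W p.2.1 ω, W p.2.2 ω)) (W p.1) + δ) /
          (Real.log F - max h0 (h p.1)))) :
    ∃ R : Fin 3 → ℝ, (∀ i, 0 < R i) ∧
      ∀ i j k : Fin 3, i ≠ j → j ≠ k → i ≠ k →
        κ * R i > shCondEntropy μ (W i) (fun ω => (W j ω, W k ω)) ∧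
        κ * (R i + R j) > shCondEntropy μ (fun ω => (W i ω, W j ω)) (W k) ∧
        R j + R k < Real.log F - max h0 (h i) := by
  have hDpos : ∀ i : Fin 3, 0 < Real.log F - max h0 (h i) := fun i =>
    sub_pos.mpr (max_lt hh0.2 (hh i).2)
  have tri : ∀ z : Fin 3, z = 0 ∨ z = 1 ∨ z = 2 := by decide
  -- all arrangements of the triple entropy agree
  have hT : ∀ i j k : Fin 3, i ≠ j → j ≠ k → i ≠ k →
      shEntropy μ (fun ω => ((W i ω, W j ω), W k ω)) =
        shEntropy μ (fun ω => ((W 0 ω, W 1 ω), W 2 ω)) := by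
    intro i j k hij hjk hik
    rcases tri i with rfl | rfl | rfl <;> rcases tri j with rfl | rfl | rfl <;>
        rcases tri k with rfl | rfl | rfl <;>
      first
        | exact absurd rfl hij
        | exact absurd rfl hjk
        | exact absurd rfl hik
        | rfl
        | (rw [shE_swapIn]; done)
        | (rw [shE_rot]; done)
        | (rw [shE_rot, shE_rot]; done)
        | (rw [shE_rot, shE_swapIn]; done)
        | (rw [shE_rot, shE_rot, shE_swapIn]; done)
  have hA : ∀ i j k : Fin 3, i ≠ j → j ≠ k → i ≠ k →
      shCondEntropy μ (fun ω => (W j ω, W k ω)) (W i) =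
        shEntropy μ (fun ω => ((W 0 ω, W 1 ω), W 2 ω)) - shEntropy μ (W i) := by
    intro i j k hij hjk hik
    simp only [shCondEntropy]
    rw [hT j k i hjk (Ne.symm hik) (Ne.symm hij)]
  have hB : ∀ i j k : Fin 3, i ≠ j → j ≠ k → i ≠ k →
      shCondEntropy μ (W i) (fun ω => (W j ω, W k ω)) =
        shEntropy μ (fun ω => ((W 0 ω, W 1 ω), W 2 ω)) -
          shEntropy μ (fun ω => (W j ω, W k ω)) := by
    intro i j k hij hjk hik
    simp only [shCondEntropy]
    rw [shE_assoc, hT i j k hij hjk hik]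
  have hE : ∀ i j k : Fin 3, i ≠ j → j ≠ k → i ≠ k →
      shEntropy μ (fun ω => ((W 0 ω, W 1 ω), W 2 ω)) + shEntropy μ (W j) + shEntropy μ (W k)
        ≤ shEntropy μ (W i) + 2 * shEntropy μ (fun ω => (W j ω, W k ω)) := by
    intro i j k hij hjk hik
    have hab := habcmi j k i hjk (Ne.symm hik) (Ne.symm hij)
    simp only [shCondMutualInfo, shCondEntropy] at hab
    rw [hT j k i hjk (Ne.symm hik) (Ne.symm hij),
        hT k i j (Ne.symm hik) hij (Ne.symm hjk),
        hT j i k (Ne.symm hij) hik hjk] at hab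
    have s1 := shE_swap μ (W j) (W i)
    have s2 := shE_swap μ (W k) (W i)
    have s3 := shE_swap μ (W k) (W j)
    linarith [hab, s1, s2, s3]
  have hPle : ∀ i j k : Fin 3, i ≠ j → j ≠ k → i ≠ k →
      shEntropy μ (fun ω => (W j ω, W k ω)) ≤
        shEntropy μ (fun ω => ((W 0 ω, W 1 ω), W 2 ω)) := by
    intro i j k hij hjk hik
    have hle := shEntropy_le_pair μ (W i) (fun ω => (W j ω, W k ω))
    simp only [shE_assoc, hT i j k hij hjk hik] at hle
    exact hle
  have hE0 : shEntropy μ (W 0) ≤ shEntropy μ (fun ω => ((W 0 ω, W 1 ω), W 2 ω)) := by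
    have hle := shEntropy_le_pair μ (fun ω => (W 1 ω, W 2 ω)) (W 0)
    simp only [hT 1 2 0 (by decide) (by decide) (by decide)] at hle
    exact hle
  have hC : ∀ i j k : Fin 3, i ≠ j → j ≠ k → i ≠ k →
      shEntropy μ (fun ω => ((W 0 ω, W 1 ω), W 2 ω)) - shEntropy μ (W i) + δ ≤
        κ * (Real.log F - max h0 (h i)) := by
    intro i j k hij hjk hik
    have hmem : ((i, j, k) : Fin 3 × Fin 3 × Fin 3) ∈
        ((Finset.univ : Finset (Fin 3 × Fin 3 × Fin 3)).filter
          (fun p => p.1 ≠ p.2.1 ∧ p.2.1 ≠ p.2.2 ∧ p.1 ≠ p.2.2)) :=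
      Finset.mem_filter.mpr ⟨Finset.mem_univ _, hij, hjk, hik⟩
    have hle : (shCondEntropy μ (fun ω => (W j ω, W k ω)) (W i) + δ) /
        (Real.log F - max h0 (h i)) ≤ κ := by
      rw [hκ]
      exact Finset.le_sup'
        (fun p : Fin 3 × Fin 3 × Fin 3 =>
          (shCondEntropy μ (fun ω => (W p.2.1 ω, W p.2.2 ω)) (W p.1) + δ) /
            (Real.log F - max h0 (h p.1))) hmem
    rw [hA i j k hij hjk hik] at hle
    exact (div_le_iff₀ (hDpos i)).mp hle
  have hκpos : 0 < κ := by
    have h1 := hA 0 1 2 (by decide) (by decide) (by decide)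
    have h2 := hC 0 1 2 (by decide) (by decide) (by decide)
    nlinarith [hDpos 0, hE0, hδ]
  set G : Fin 3 → ℝ :=
    fun i => shEntropy μ (fun ω => ((W 0 ω, W 1 ω), W 2 ω)) - shEntropy μ (W i) + δ / 2
    with hG
  have hsum : ∀ i j k : Fin 3, i ≠ j → j ≠ k → i ≠ k →
      G 0 + G 1 + G 2 = G i + G j + G k := by
    intro i j k hij hjk hik
    rcases tri i with rfl | rfl | rfl <;> rcases tri j with rfl | rfl | rfl <;>
        rcases tri k with rfl | rfl | rfl <;>
      first
        | exact absurd rfl hij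
        | exact absurd rfl hjk
        | exact absurd rfl hik
        | ring
  have hκR : ∀ x : ℝ, κ * (x / κ) = x := fun x => by field_simp
  refine ⟨fun i => ((G 0 + G 1 + G 2) / 2 - G i) / κ, ?_, ?_⟩
  · -- positivity
    have key : ∀ i j k : Fin 3, i ≠ j → j ≠ k → i ≠ k →
        0 < ((G 0 + G 1 + G 2) / 2 - G i) / κ := by
      intro i j k hij hjk hik
      apply div_pos _ hκpos
      rw [hsum i j k hij hjk hik]
      have h1 := hE i j k hij hjk hik
      have h2 := hPle i j k hij hjk hik
      simp only [hG]
      linarith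
    intro i
    rcases tri i with rfl | rfl | rfl
    · exact key 0 1 2 (by decide) (by decide) (by decide)
    · exact key 1 0 2 (by decide) (by decide) (by decide)
    · exact key 2 0 1 (by decide) (by decide) (by decide)
  · intro i j k hij hjk hik
    refine ⟨?_, ?_, ?_⟩
    · -- κ R i > H[Wi | (Wj,Wk)]
      rw [hB i j k hij hjk hik, hκR, hsum i j k hij hjk hik]
      have h1 := hE i j k hij hjk hik
      simp only [hG]
      linarith
    · -- κ (R i + R j) > H[(Wi,Wj)|Wk]
      rw [hA k i j (Ne.symm hik) hij (Ne.symm hjk)]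
      rw [mul_add, hκR, hκR, hsum i j k hij hjk hik]
      simp only [hG]
      linarith
    · -- R j + R k < log F - max h0 (h i)
      rw [← add_div]
      have hnum : (G 0 + G 1 + G 2) / 2 - G j + ((G 0 + G 1 + G 2) / 2 - G k) = G i := by
        rw [hsum i j k hij hjk hik]; ring
      rw [hnum, div_lt_iff₀ hκpos]
      have h2 := hC i j k hij hjk hik
      have h3 := mul_comm κ (Real.log F - max h0 (h i))
      simp only [hG]
      linarith
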